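/- Let p be an odd prime and m a positive integer with gcd(m,p) = 1. Then Q_p(m,q) ≡ ∑_{j=1}^{p-1} ⌊jm/p⌋/[jm]_q - ((p-1)(m-1)/2)(1-q) (mod [p]_q), in the localization of ℚ[q] at [p]_q. -/

import Mathlib

open Polynomial Finset

/-- `[n]_q = 1 + q + ⋯ + q^(n-1)` as a polynomial in `ℚ[q]`. -/
noncomputable def qnum (n : ℕ) : ℚ[X] := ∑ i ∈ Finset.range n, X ^ i

/-- The embedding of `ℚ[q]` into the field of rational functions `ℚ(q)`. -/
noncomputable def Φ : ℚ[X] →+* RatFunc ℚ := algebraMap _ _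

/-- `ModPow p k x` says that `x` lies in the ideal generated by `[p]_q ^ k` in the
localization of `ℚ[q]` at the polynomials coprime to the irreducible polynomial
`[p]_q`: that is, `x = [p]_q ^ k · a / b` with `[p]_q ∤ b`. -/
def ModPow (p k : ℕ) (x : RatFunc ℚ) : Prop :=
  ∃ a b : ℚ[X], ¬ (qnum p ∣ b) ∧ x * Φ b = Φ (qnum p ^ k * a)


def Pint (p : ℕ) (x : RatFunc ℚ) : Prop :=
  ∃ a b : ℚ[X], ¬ (qnum p ∣ b) ∧ x * Φ b = Φ a

lemma Phi_injective : Function.Injective Φ := RatFunc.algebraMap_injective ℚ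

lemma Phi_ne_zero {a : ℚ[X]} (ha : a ≠ 0) : Φ a ≠ 0 := by
  intro h; exact ha (Phi_injective (by simpa using h))

lemma qnum_eq_cyclotomic {p : ℕ} (hp : p.Prime) : qnum p = cyclotomic p ℚ := by
  haveI : Fact p.Prime := ⟨hp⟩
  rw [cyclotomic_prime ℚ p]; rfl

lemma qnum_prime {p : ℕ} (hp : p.Prime) : Prime (qnum p) := by
  rw [qnum_eq_cyclotomic hp]
  exact (cyclotomic.irreducible_rat hp.pos).prime

lemma qnum_ne_zero {n : ℕ} (hn : 0 < n) : qnum n ≠ 0 := by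
  intro h
  have := congrArg (Polynomial.eval 1) h
  simp [qnum, Polynomial.eval_finset_sum] at this
  omega

set_option linter.unusedSectionVars false

section API
variable {p : ℕ} (hp : p.Prime)

lemma modpow_def' {k : ℕ} {x : RatFunc ℚ} :
    ModPow p k x ↔ ∃ a b : ℚ[X], ¬ (qnum p ∣ b) ∧ x * Φ b = Φ (qnum p ^ k * a) := Iff.rfl

include hp

lemma not_dvd_mul {b b' : ℚ[X]} (hb : ¬ qnum p ∣ b) (hb' : ¬ qnum p ∣ b') :
    ¬ qnum p ∣ b * b' := fun h => by
  rcases (qnum_prime hp).dvd_mul.mp h with h | h <;> tauto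

lemma pint_phi (a : ℚ[X]) : Pint p (Φ a) :=
  ⟨a, 1, by simpa using fun h => (qnum_prime hp).not_unit (isUnit_of_dvd_one h)⟩

lemma pint_div {a b : ℚ[X]} (hb : ¬ qnum p ∣ b) : Pint p (Φ a / Φ b) := by
  refine ⟨a, b, hb, ?_⟩
  have hb0 : b ≠ 0 := fun h => hb (h ▸ dvd_zero _)
  field_simp [Phi_ne_zero hb0]

lemma pint_add {x y : RatFunc ℚ} (hx : Pint p x) (hy : Pint p y) : Pint p (x + y) := by
  obtain ⟨a, b, hb, hab⟩ := hx
  obtain ⟨c, d, hd, hcd⟩ := hy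
  refine ⟨a * d + c * b, b * d, not_dvd_mul hp hb hd, ?_⟩
  calc (x + y) * Φ (b * d) = (x * Φ b) * Φ d + (y * Φ d) * Φ b := by rw [map_mul]; ring
    _ = Φ a * Φ d + Φ c * Φ b := by rw [hab, hcd]
    _ = Φ (a * d + c * b) := by rw [map_add, map_mul, map_mul]

lemma pint_mul {x y : RatFunc ℚ} (hx : Pint p x) (hy : Pint p y) : Pint p (x * y) := by
  obtain ⟨a, b, hb, hab⟩ := hx
  obtain ⟨c, d, hd, hcd⟩ := hy
  refine ⟨a * c, b * d, not_dvd_mul hp hb hd, ?_⟩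
  rw [map_mul, map_mul]
  calc x * y * (Φ b * Φ d) = (x * Φ b) * (y * Φ d) := by ring
    _ = Φ a * Φ c := by rw [hab, hcd]

lemma pint_neg {x : RatFunc ℚ} (hx : Pint p x) : Pint p (-x) := by
  obtain ⟨a, b, hb, hab⟩ := hx
  exact ⟨-a, b, hb, by rw [map_neg, neg_mul, hab]⟩

lemma pint_sum {ι : Type*} {s : Finset ι} {f : ι → RatFunc ℚ}
    (h : ∀ i ∈ s, Pint p (f i)) : Pint p (∑ i ∈ s, f i) := by
  classical
  induction s using Finset.induction_on with
  | empty => simpa using pint_phi hp 0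
  | insert i s hni ih =>
    rw [Finset.sum_insert hni]
    exact pint_add hp (h i (by simp)) (ih fun j hj => h j (by simp [hj]))

lemma modpow_zero_mem (k : ℕ) : ModPow p k 0 :=
  ⟨0, 1, by simpa using fun h => (qnum_prime hp).not_unit (isUnit_of_dvd_one h)⟩

lemma modpow_add {k : ℕ} {x y : RatFunc ℚ} (hx : ModPow p k x) (hy : ModPow p k y) :
    ModPow p k (x + y) := by
  obtain ⟨a, b, hb, hab⟩ := hx
  obtain ⟨c, d, hd, hcd⟩ := hy
  refine ⟨a * d + c * b, b * d, not_dvd_mul hp hb hd, ?_⟩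
  calc (x + y) * Φ (b * d) = (x * Φ b) * Φ d + (y * Φ d) * Φ b := by rw [map_mul]; ring
    _ = Φ (qnum p ^ k * a) * Φ d + Φ (qnum p ^ k * c) * Φ b := by rw [hab, hcd]
    _ = Φ (qnum p ^ k * (a * d + c * b)) := by rw [← map_mul, ← map_mul, ← map_add]; ring_nf

lemma modpow_mul_pint {k : ℕ} {x y : RatFunc ℚ} (hx : ModPow p k x) (hy : Pint p y) :
    ModPow p k (x * y) := by
  obtain ⟨a, b, hb, hab⟩ := hx
  obtain ⟨c, d, hd, hcd⟩ := hy
  refine ⟨a * c, b * d, not_dvd_mul hp hb hd, ?_⟩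
  calc x * y * Φ (b * d) = (x * Φ b) * (y * Φ d) := by rw [map_mul]; ring
    _ = Φ (qnum p ^ k * a) * Φ c := by rw [hab, hcd]
    _ = Φ (qnum p ^ k * (a * c)) := by rw [← map_mul]; ring_nf

lemma modpow_neg {k : ℕ} {x : RatFunc ℚ} (hx : ModPow p k x) : ModPow p k (-x) := by
  obtain ⟨a, b, hb, hab⟩ := hx
  exact ⟨-a, b, hb, by rw [neg_mul, hab, mul_neg, ← map_neg]⟩

lemma modpow_sub {k : ℕ} {x y : RatFunc ℚ} (hx : ModPow p k x) (hy : ModPow p k y) :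
    ModPow p k (x - y) := by
  rw [sub_eq_add_neg]; exact modpow_add hp hx (modpow_neg hp hy)

lemma modpow_sum {ι : Type*} {k : ℕ} {s : Finset ι} {f : ι → RatFunc ℚ}
    (h : ∀ i ∈ s, ModPow p k (f i)) : ModPow p k (∑ i ∈ s, f i) := by
  classical
  induction s using Finset.induction_on with
  | empty => simpa using modpow_zero_mem hp k
  | insert i s hni ih =>
    rw [Finset.sum_insert hni]
    exact modpow_add hp (h i (by simp)) (ih fun j hj => h j (by simp [hj]))

lemma modpow_of_dvd {k : ℕ} {a b : ℚ[X]} (hb : ¬ qnum p ∣ b) (hdvd : qnum p ^ k ∣ a) :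
    ModPow p k (Φ a / Φ b) := by
  obtain ⟨c, rfl⟩ := hdvd
  refine ⟨c, b, hb, ?_⟩
  have hb0 : b ≠ 0 := fun h => hb (h ▸ dvd_zero _)
  field_simp [Phi_ne_zero hb0]

lemma modpow_phi_mul_pint {x : RatFunc ℚ} (hx : Pint p x) : ModPow p 1 (Φ (qnum p) * x) := by
  obtain ⟨a, b, hb, hab⟩ := hx
  refine ⟨a, b, hb, ?_⟩
  calc Φ (qnum p) * x * Φ b = Φ (qnum p) * (x * Φ b) := by ring
    _ = Φ (qnum p) * Φ a := by rw [hab]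
    _ = Φ (qnum p ^ 1 * a) := by rw [← map_mul]; ring_nf

lemma modpow_div_qnum {k : ℕ} {x : RatFunc ℚ} (hx : ModPow p (k+1) x) :
    ModPow p k (x / Φ (qnum p)) := by
  obtain ⟨a, b, hb, hab⟩ := hx
  refine ⟨a, b, hb, ?_⟩
  have h0 : Φ (qnum p) ≠ 0 := Phi_ne_zero (qnum_ne_zero hp.pos)
  have key : Φ (qnum p ^ (k+1) * a) = Φ (qnum p ^ k * a) * Φ (qnum p) := by
    rw [← map_mul]; congr 1; ring
  rw [div_mul_eq_mul_div, hab, key, mul_div_assoc, div_self h0, mul_one]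

end API

section Root
variable {p : ℕ} (hp : p.Prime) {K : Type*} [Field K] [CharZero K] {ζ : K}
  (hζ : IsPrimitiveRoot ζ p)

include hp hζ in
lemma qnum_dvd_iff {A : ℚ[X]} : qnum p ∣ A ↔ aeval ζ A = 0 := by
  rw [qnum_eq_cyclotomic hp, cyclotomic_eq_minpoly_rat hζ hp.pos]
  constructor
  · rintro ⟨c, rfl⟩; rw [map_mul, minpoly.aeval, zero_mul]
  · exact minpoly.dvd ℚ ζ

lemma aeval_qnum (n : ℕ) : aeval ζ (qnum n) = ∑ i ∈ Finset.range n, ζ ^ i := by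
  simp [qnum]

lemma aeval_qnum_mul (n : ℕ) : aeval ζ (qnum n) * (ζ - 1) = ζ ^ n - 1 := by
  rw [aeval_qnum]; exact geom_sum_mul ζ n

end Root

/-- `∑_{i<a} X^(p i)`, so that `X^(p a) - 1 = (X^p - 1) * Spoly p a`. -/
noncomputable def Spoly (p a : ℕ) : ℚ[X] := ∑ i ∈ Finset.range a, X ^ (p * i)

noncomputable def zp (p : ℕ) : ℂ := Complex.exp (2 * Real.pi * Complex.I / p)

lemma zp_prim {p : ℕ} (hp : p ≠ 0) : IsPrimitiveRoot (zp p) p :=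
  Complex.isPrimitiveRoot_exp p hp

section Key
variable {p : ℕ} (hp : p.Prime)
include hp

lemma qnum_not_dvd_qnum {n : ℕ} (hn : ¬ p ∣ n) : ¬ qnum p ∣ qnum n := by
  have hζ := zp_prim hp.pos.ne'
  rw [qnum_dvd_iff hp hζ]
  intro h
  have h2 := aeval_qnum_mul (ζ := zp p) n
  rw [h, zero_mul] at h2
  exact hn ((hζ.pow_eq_one_iff_dvd n).mp (by linear_combination -h2))

lemma key_dvd {n a r : ℕ} (hn : n = p * a + r) (hr0 : 0 < r) (hrp : r < p) :
    qnum p ∣ (X ^ r * Spoly p a) * qnum n - (C (a : ℚ) * X ^ n) * qnum r := by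
  have hζ := zp_prim hp.pos.ne'
  set ζ := zp p with hζdef
  rw [qnum_dvd_iff hp hζ]
  have hζp : ζ ^ p = 1 := hζ.pow_eq_one
  have hS : aeval ζ (Spoly p a) = (a : ℂ) := by
    simp [Spoly, pow_mul, hζp]
  have hζn : ζ ^ n = ζ ^ r := by rw [hn, pow_add, pow_mul, hζp, one_pow, one_mul]
  have hone : ζ - 1 ≠ 0 := sub_ne_zero.mpr (hζ.ne_one hp.one_lt)
  have hQ : aeval ζ (qnum n) = aeval ζ (qnum r) := by
    apply mul_right_cancel₀ hone
    rw [aeval_qnum_mul, aeval_qnum_mul, ← hζn]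
  rw [map_sub, map_mul, map_mul, map_mul, map_mul, map_pow, map_pow, aeval_X, aeval_C,
    hS, hζn, hQ, map_natCast]
  ring

end Key

lemma qnum_mul_X_sub_one (n : ℕ) : qnum n * (X - 1) = (X:ℚ[X]) ^ n - 1 := geom_sum_mul X n

lemma X_sub_one_ne_zero : (X - 1 : ℚ[X]) ≠ 0 := by
  intro h
  have := congrArg (Polynomial.eval 0) h
  simp at this

lemma one_sub_X_pow_ne_zero {r : ℕ} (hr : 0 < r) : (1 - X ^ r : ℚ[X]) ≠ 0 := by
  intro h
  have := congrArg (Polynomial.eval 0) h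
  simp [zero_pow hr.ne'] at this

lemma factor_id {p n a r : ℕ} (hn : n = p * a + r) :
    (1 - X ^ n) * qnum r =
      (1 - X ^ r) * qnum r + qnum p * ((1 - X ^ r) * (X ^ r * Spoly p a)) := by
  apply mul_right_cancel₀ X_sub_one_ne_zero
  have h1 : qnum r * (X - 1) = (X:ℚ[X]) ^ r - 1 := qnum_mul_X_sub_one r
  have h2 : qnum p * (X - 1) = (X:ℚ[X]) ^ p - 1 := qnum_mul_X_sub_one p
  have h3 : (X:ℚ[X]) ^ (p * a) - 1 = ((X:ℚ[X]) ^ p - 1) * Spoly p a := by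
    have hg := geom_sum_mul ((X:ℚ[X]) ^ p) a
    have hs : Spoly p a = ∑ i ∈ Finset.range a, ((X:ℚ[X]) ^ p) ^ i := by
      simp [Spoly, pow_mul]
    rw [hs, pow_mul, ← hg]
    ring
  have h4 : (X:ℚ[X]) ^ n = X ^ (p * a) * X ^ r := by rw [hn, pow_add]
  rw [h4]
  linear_combination (X^r * (1 - (X:ℚ[X])^(p*a))) * h1
    - (X^r * Spoly p a * (1 - (X:ℚ[X])^r)) * h2 + ((1 - (X:ℚ[X])^r) * X^r) * h3

lemma factor_id_ratfunc {p n a r : ℕ} (hn : n = p * a + r) (hr0 : 0 < r) :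
    Φ (1 - X ^ n) / Φ (1 - X ^ r) =
      1 + Φ (qnum p) * (Φ (X ^ r * Spoly p a) / Φ (qnum r)) := by
  have hden : Φ (1 - X ^ r : ℚ[X]) ≠ 0 := Phi_ne_zero (one_sub_X_pow_ne_zero hr0)
  have hq : Φ (qnum r) ≠ 0 := Phi_ne_zero (qnum_ne_zero hr0)
  have h := congrArg Φ (factor_id (p := p) hn)
  simp only [map_mul, map_add, map_sub, map_pow, map_one] at h hden ⊢
  field_simp
  linear_combination h

section More
variable {p : ℕ} (hp : p.Prime)
include hp

lemma modpow_pow_mul_pint {k : ℕ} {x : RatFunc ℚ} (hx : Pint p x) :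
    ModPow p k (Φ (qnum p) ^ k * x) := by
  obtain ⟨a, b, hb, hab⟩ := hx
  refine ⟨a, b, hb, ?_⟩
  calc Φ (qnum p) ^ k * x * Φ b = Φ (qnum p) ^ k * (x * Φ b) := by ring
    _ = Φ (qnum p) ^ k * Φ a := by rw [hab]
    _ = Φ (qnum p ^ k * a) := by rw [map_mul, map_pow]

lemma prod_one_add {ι : Type*} (s : Finset ι) (g : ι → RatFunc ℚ)
    (hg : ∀ i ∈ s, Pint p (g i)) :
    ModPow p 2 ((∏ i ∈ s, (1 + Φ (qnum p) * g i)) - 1 - Φ (qnum p) * ∑ i ∈ s, g i) := by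
  classical
  induction s using Finset.induction_on with
  | empty => simpa using modpow_zero_mem hp 2
  | insert i s hni ih =>
    have hgi : Pint p (g i) := hg i (by simp)
    have hgs : ∀ j ∈ s, Pint p (g j) := fun j hj => hg j (by simp [hj])
    have hE := ih hgs
    set P := ∏ j ∈ s, (1 + Φ (qnum p) * g j) with hP
    set S := ∑ j ∈ s, g j with hS
    have key : (∏ j ∈ insert i s, (1 + Φ (qnum p) * g j)) - 1
          - Φ (qnum p) * ∑ j ∈ insert i s, g j
        = Φ (qnum p) ^ 2 * (g i * S) + (P - 1 - Φ (qnum p) * S) * (1 + Φ (qnum p) * g i) := by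
      rw [Finset.prod_insert hni, Finset.sum_insert hni]
      ring
    rw [key]
    apply modpow_add hp
    · exact modpow_pow_mul_pint hp (pint_mul hp hgi (pint_sum hp hgs))
    · have h1 : Pint p (1 + Φ (qnum p) * g i) :=
        pint_add hp (by simpa using pint_phi hp 1) (pint_mul hp (pint_phi hp _) hgi)
      exact modpow_mul_pint hp hE h1

end More

section Reindex
variable {p m : ℕ} (hp : p.Prime) (hmp : Nat.Coprime m p)
include hp hmp

lemma not_p_dvd {j : ℕ} (hj : j ∈ Finset.Icc 1 (p-1)) : ¬ p ∣ m * j := by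
  rw [Finset.mem_Icc] at hj
  have hp2 := hp.two_le
  rintro h
  rcases (Nat.Prime.dvd_mul hp).mp h with h | h
  · have h1 : p ∣ Nat.gcd m p := Nat.dvd_gcd h dvd_rfl
    rw [hmp] at h1
    exact hp.one_lt.ne' (Nat.eq_one_of_dvd_one h1)
  · exact Nat.not_dvd_of_pos_of_lt (by omega) (by omega) h

lemma rho_mem {j : ℕ} (hj : j ∈ Finset.Icc 1 (p-1)) :
    (m * j) % p ∈ Finset.Icc 1 (p-1) := by
  have h1 := not_p_dvd hp hmp hj
  have h2 : (m * j) % p < p := Nat.mod_lt _ hp.pos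
  have h3 : (m * j) % p ≠ 0 := fun h => h1 (Nat.dvd_of_mod_eq_zero h)
  rw [Finset.mem_Icc]
  omega

lemma rho_injOn : Set.InjOn (fun j => (m * j) % p) (Finset.Icc 1 (p-1)) := by
  intro j1 h1 j2 h2 h
  simp only [Finset.coe_Icc, Set.mem_Icc] at h1 h2
  have hmod : m * j1 ≡ m * j2 [MOD p] := h
  have hj : j1 ≡ j2 [MOD p] := Nat.ModEq.cancel_left_of_coprime hmp.symm hmod
  have hp2 := hp.two_le
  have e1 : j1 % p = j1 := Nat.mod_eq_of_lt (by omega)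
  have e2 : j2 % p = j2 := Nat.mod_eq_of_lt (by omega)
  rwa [Nat.ModEq, e1, e2] at hj

lemma rho_image :
    (Finset.Icc 1 (p-1)).image (fun j => (m * j) % p) = Finset.Icc 1 (p-1) := by
  apply Finset.eq_of_subset_of_card_le
  · intro k hk
    obtain ⟨j, hj, rfl⟩ := Finset.mem_image.mp hk
    exact rho_mem hp hmp hj
  · rw [Finset.card_image_of_injOn (rho_injOn hp hmp)]

lemma rho_prod {M : Type*} [CommMonoid M] (F : ℕ → M) :
    ∏ j ∈ Finset.Icc 1 (p-1), F ((m * j) % p) = ∏ k ∈ Finset.Icc 1 (p-1), F k := by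
  conv_rhs => rw [← rho_image hp hmp]
  rw [Finset.prod_image (fun a ha b hb h => rho_injOn hp hmp ha hb h)]

lemma rho_sum {M : Type*} [AddCommMonoid M] (F : ℕ → M) :
    ∑ j ∈ Finset.Icc 1 (p-1), F ((m * j) % p) = ∑ k ∈ Finset.Icc 1 (p-1), F k := by
  conv_rhs => rw [← rho_image hp hmp]
  rw [Finset.sum_image (fun a ha b hb h => rho_injOn hp hmp ha hb h)]

lemma sum_floor_eq (hm : 0 < m) : ∑ j ∈ Finset.Icc 1 (p-1), (m * j / p) = (p-1) * (m-1) / 2 := by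
  set s := Finset.Icc 1 (p-1)
  set A := ∑ j ∈ s, (m * j / p) with hA
  set T := ∑ j ∈ s, j with hT
  have h1 : ∑ j ∈ s, (m * j) = m * T := by rw [hT, Finset.mul_sum]
  have h2 : ∑ j ∈ s, (m * j) = p * A + T := by
    have : ∀ j ∈ s, m * j = p * (m * j / p) + (m * j) % p :=
      fun j _ => (Nat.div_add_mod _ p).symm
    rw [Finset.sum_congr rfl this, Finset.sum_add_distrib, ← Finset.mul_sum, ← hA]
    congr 1
    exact rho_sum hp hmp id
  have h4 : T * 2 = p * (p - 1) := by
    have h5 : T = ∑ j ∈ Finset.range p, j := by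
      have hIcc : Finset.Icc 1 (p-1) = Finset.Ico 1 p := by
        rw [← Finset.Ico_add_one_right_eq_Icc]; congr 1; have := hp.two_le; omega
      rw [hT]
      show ∑ j ∈ Finset.Icc 1 (p-1), j = _
      rw [hIcc, Finset.range_eq_Ico, Finset.sum_eq_sum_Ico_succ_bot hp.pos]
      simp
    rw [h5]
    exact Finset.sum_range_id_mul_two p
  have hm' : m = (m - 1) + 1 := by omega
  have h6 : p * (2 * A) = p * ((m - 1) * (p - 1)) := by
    have hx : p * (2 * A) + T * 2 = ((m-1)+1) * (T * 2) := by
      calc p * (2 * A) + T * 2 = (p * A + T) * 2 := by ring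
        _ = (m * T) * 2 := by rw [← h2, h1]
        _ = ((m-1)+1) * (T * 2) := by rw [← hm']; ring
    rw [h4] at hx
    have hy : ((m-1)+1) * (p * (p-1)) = p * ((m-1) * (p-1)) + p * (p-1) := by ring
    rw [hy] at hx
    exact Nat.add_right_cancel hx
  have h8 : 2 * A = (m - 1) * (p - 1) := Nat.eq_of_mul_eq_mul_left hp.pos h6
  have : (p - 1) * (m - 1) / 2 = (2 * A) / 2 := by rw [h8, Nat.mul_comm]
  rw [this, Nat.mul_div_cancel_left _ (by norm_num)]

end Reindex

lemma phi_div_sub {a b c d : ℚ[X]} (hb : b ≠ 0) (hd : d ≠ 0) :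
    Φ a / Φ b - Φ c / Φ d = Φ (a * d - c * b) / Φ (b * d) := by
  have hb' := Phi_ne_zero hb
  have hd' := Phi_ne_zero hd
  rw [map_sub, map_mul, map_mul, map_mul]
  field_simp

lemma step3 {p : ℕ} (hp : p.Prime) {n a r : ℕ} (hn : n = p * a + r) (hr0 : 0 < r)
    (hrp : r < p) (hpn : ¬ p ∣ n) :
    ModPow p 1 (Φ (X ^ r * Spoly p a) / Φ (qnum r) - Φ (C (a:ℚ) * X ^ n) / Φ (qnum n)) := by
  have hdr : ¬ qnum p ∣ qnum r :=
    qnum_not_dvd_qnum hp (Nat.not_dvd_of_pos_of_lt hr0 hrp)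
  have hdn : ¬ qnum p ∣ qnum n := qnum_not_dvd_qnum hp hpn
  have hr0' : qnum r ≠ 0 := qnum_ne_zero hr0
  have hn0' : qnum n ≠ 0 := qnum_ne_zero (by omega)
  rw [phi_div_sub hr0' hn0']
  apply modpow_of_dvd hp (not_dvd_mul hp hdr hdn)
  rw [pow_one]
  exact key_dvd hp hn hr0 hrp

lemma tj_eq {n : ℕ} (hn0 : 0 < n) (aj : ℕ) :
    Φ (C (aj:ℚ) * X ^ n) / Φ (qnum n)
      = (aj : RatFunc ℚ) / Φ (qnum n) + Φ ((aj : ℚ[X]) * (X - 1)) := by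
  have hq : Φ (qnum n) ≠ 0 := Phi_ne_zero (qnum_ne_zero hn0)
  have h : (C (aj:ℚ)) * X ^ n = C (aj:ℚ) + (C (aj:ℚ) * (X - 1)) * qnum n := by
    linear_combination (-(C (aj:ℚ))) * qnum_mul_X_sub_one n
  rw [h, map_add, map_mul, add_div, mul_div_assoc, div_self hq, mul_one,
    Polynomial.C_eq_natCast, map_natCast]


/-- The `q`-Fermat quotient `Q_p(m,q) = ((q^m;q^m)_{p-1}/(q;q)_{p-1} - 1)/[p]_q`,
as an element of `ℚ(q)`. -/
noncomputable def Qm (p m : ℕ) : RatFunc ℚ :=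
  (Φ (∏ j ∈ Finset.Icc 1 (p-1), (1 - X^(m*j)))
    / Φ (∏ j ∈ Finset.Icc 1 (p-1), (1 - X^j)) - 1) / Φ (qnum p)

/-- For an odd prime `p` and a positive integer `m` with `gcd(m,p)=1`,
`Q_p(m,q) ≡ ∑_{j=1}^{p-1} ⌊jm/p⌋/[jm]_q - ((p-1)(m-1)/2)(1-q) (mod [p]_q)`
in the localization of `ℚ[q]` at `[p]_q`. -/
theorem q_lerch (p m : ℕ) (hp : p.Prime) (hodd : Odd p) (hm : 0 < m)
    (hmp : Nat.Coprime m p) :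
    ModPow p 1
      (Qm p m
        - ((∑ j ∈ Finset.Icc 1 (p-1), ((j*m/p : ℕ) : RatFunc ℚ) / Φ (qnum (j*m)))
            - Φ (((((p-1)*(m-1)/2 : ℕ)) : ℚ[X]) * (1 - X)))) := by
  classical
  have hp2 := hp.two_le
  set s := Finset.Icc 1 (p-1) with hs
  set a : ℕ → ℕ := fun j => m * j / p with ha
  set r : ℕ → ℕ := fun j => (m * j) % p with hr
  set g : ℕ → RatFunc ℚ := fun j => Φ (X ^ (r j) * Spoly p (a j)) / Φ (qnum (r j)) with hg
  have hnj : ∀ j ∈ s, m * j = p * a j + r j := fun j _ => (Nat.div_add_mod _ _).symm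
  have hrmem : ∀ j ∈ s, r j ∈ s := fun j hj => rho_mem hp hmp hj
  have hr0 : ∀ j ∈ s, 0 < r j := by
    intro j hj; have := hrmem j hj; rw [hs, Finset.mem_Icc] at this; omega
  have hrp : ∀ j ∈ s, r j < p := fun j hj => Nat.mod_lt _ hp.pos
  have hpmj : ∀ j ∈ s, ¬ p ∣ m * j := fun j hj => not_p_dvd hp hmp hj
  have hrdvd : ∀ j ∈ s, ¬ p ∣ r j :=
    fun j hj => Nat.not_dvd_of_pos_of_lt (hr0 j hj) (hrp j hj)
  have hgpint : ∀ j ∈ s, Pint p (g j) :=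
    fun j hj => pint_div hp (qnum_not_dvd_qnum hp (hrdvd j hj))
  -- Step A : Qm as a product
  have stepA : Qm p m = ((∏ j ∈ s, (1 + Φ (qnum p) * g j)) - 1) / Φ (qnum p) := by
    have key : Φ (∏ j ∈ s, (1 - X^(m*j))) / Φ (∏ j ∈ s, (1 - X^j))
        = ∏ j ∈ s, (1 + Φ (qnum p) * g j) := by
      rw [map_prod, map_prod]
      have hD : ∏ j ∈ s, Φ ((1:ℚ[X]) - X^j) = ∏ j ∈ s, Φ ((1:ℚ[X]) - X^(r j)) :=
        (rho_prod hp hmp (fun k => Φ ((1:ℚ[X]) - X^k))).symm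
      rw [hD, ← Finset.prod_div_distrib]
      exact Finset.prod_congr rfl fun j hj => factor_id_ratfunc (hnj j hj) (hr0 j hj)
    unfold Qm
    rw [← hs, key]
  -- Step B
  have stepB : ModPow p 1 (Qm p m - ∑ j ∈ s, g j) := by
    have hΦp : Φ (qnum p) ≠ 0 := Phi_ne_zero (qnum_ne_zero hp.pos)
    have h2 : Qm p m - ∑ j ∈ s, g j
        = ((∏ j ∈ s, (1 + Φ (qnum p) * g j)) - 1 - Φ (qnum p) * ∑ j ∈ s, g j)
            / Φ (qnum p) := by
      rw [stepA]; field_simp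
    rw [h2]
    exact modpow_div_qnum hp (prod_one_add hp s g hgpint)
  -- Step C/D
  set t : ℕ → RatFunc ℚ :=
    fun j => (a j : RatFunc ℚ) / Φ (qnum (m * j)) + Φ ((a j : ℚ[X]) * (X - 1)) with ht
  have stepD : ModPow p 1 ((∑ j ∈ s, g j) - ∑ j ∈ s, t j) := by
    rw [← Finset.sum_sub_distrib]
    apply modpow_sum hp
    intro j hj
    have h3 := step3 hp (hnj j hj) (hr0 j hj) (hrp j hj) (hpmj j hj)
    rwa [tj_eq (by have := hr0 j hj; have := hnj j hj; omega) (a j)] at h3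
  -- Step E : sum of t equals the RHS
  have stepE : ∑ j ∈ s, t j
      = (∑ j ∈ s, ((j*m/p : ℕ) : RatFunc ℚ) / Φ (qnum (j*m)))
          - Φ (((((p-1)*(m-1)/2 : ℕ)) : ℚ[X]) * (1 - X)) := by
    have hsum : (∑ j ∈ s, ((a j : ℚ[X]))) = (((p-1)*(m-1)/2 : ℕ) : ℚ[X]) := by
      rw [← Nat.cast_sum]
      exact_mod_cast congrArg (Nat.cast : ℕ → ℚ[X]) (sum_floor_eq hp hmp hm)
    have e1 : ∑ j ∈ s, (a j : RatFunc ℚ) / Φ (qnum (m * j))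
        = ∑ j ∈ s, ((j*m/p : ℕ) : RatFunc ℚ) / Φ (qnum (j*m)) :=
      Finset.sum_congr rfl fun j _ => by rw [Nat.mul_comm j m]
    have e2 : ∑ j ∈ s, Φ ((a j : ℚ[X]) * (X - 1))
        = - Φ (((((p-1)*(m-1)/2 : ℕ)) : ℚ[X]) * (1 - X)) := by
      rw [← map_sum, ← map_neg]
      congr 1
      rw [← Finset.sum_mul, hsum]
      ring
    rw [Finset.sum_add_distrib, e1, e2]; ring
  have final := modpow_add hp stepB stepD
  rw [stepE] at final
  convert final using 1
  ring
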